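/- Let T be a trajectory in ℝ³ with n ≥ 1 edges, each edge axis-parallel (for each 1 ≤ i ≤ n, the points p_{i−1} and p_i differ in at most one coordinate), and such that every edge parallel to the z-axis has positive length. Fix a side length s > 0. Then for every (x, y, z) ∈ ℝ³ there exist (x', y', z') ∈ ℝ³ and an index j ∈ {0, …, n} such that w_T(x', y', z') ≥ w_T(x, y, z) and the z-coordinate (p_j).3 of the vertex p_j equals z' or z' + s; that is, for any axis-parallel cube there is a cube of at least the same weight one of whose two xy-parallel face planes passes through a vertex of T. -/

import Mathlib

open MeasureTheory Set
open scoped ENNReal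

/-- `Cube s x y z` is the axis-parallel cube `[x, x+s] × [y, y+s] × [z, z+s]` in `ℝ³`. -/
def Cube (s x y z : ℝ) : Set (ℝ × ℝ × ℝ) :=
  Icc x (x + s) ×ˢ Icc y (y + s) ×ˢ Icc z (z + s)

/-- The weight of `Cube s x y z` with respect to a trajectory `T` on `[t0, tn]`:
the Lebesgue measure of `{t ∈ [t0, tn] : T t ∈ Cube s x y z}`. -/
noncomputable def wgt3 (s t0 tn : ℝ) (T : ℝ → ℝ × ℝ × ℝ) (x y z : ℝ) : ℝ≥0∞ :=
  volume {τ ∈ Icc t0 tn | T τ ∈ Cube s x y z}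

lemma mem_Cube_iff (s x y w : ℝ) (v : ℝ × ℝ × ℝ) :
    v ∈ Cube s x y w ↔ v.1 ∈ Icc x (x+s) ∧ v.2.1 ∈ Icc y (y+s) ∧ v.2.2 ∈ Icc w (w+s) := by
  simp only [Cube, Set.mem_prod]

lemma vol_Ico_inter_Icc (a b l r : ℝ) :
    volume (Ico a b ∩ Icc l r) = ENNReal.ofReal (min b r - max a l) := by
  apply le_antisymm
  · calc volume (Ico a b ∩ Icc l r) ≤ volume (Icc (max a l) (min b r)) := by
          apply measure_mono
          rintro τ ⟨⟨h1, h2⟩, h3, h4⟩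
          exact ⟨max_le h1 h3, le_min h2.le h4⟩
        _ = ENNReal.ofReal (min b r - max a l) := Real.volume_Icc
  · calc ENNReal.ofReal (min b r - max a l) = volume (Ioo (max a l) (min b r)) := Real.volume_Ioo.symm
      _ ≤ volume (Ico a b ∩ Icc l r) := by
          apply measure_mono
          rintro τ ⟨h1, h2⟩
          simp only [max_lt_iff, lt_min_iff] at h1 h2
          exact ⟨⟨h1.1.le, h2.1⟩, h1.2.le, h2.2.le⟩

lemma affine_combo (k α β c1 c2 z : ℝ) (h12 : c1 < c2) :
    ((c2 - z)/(c2 - c1)) * (k * (α + β * c1)) + ((z - c1)/(c2 - c1)) * (k * (α + β * c2))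
      = k * (α + β * z) := by
  have h : c2 - c1 ≠ 0 := by linarith
  field_simp
  ring

lemma core_B (s mz Mz c1 c2 z k : ℝ) (hs : 0 < s) (hk : 0 ≤ k) (hmM : mz ≤ Mz)
    (h1 : c1 < z) (h2 : z < c2)
    (b1 : mz ≤ c1 ∨ c2 ≤ mz) (b2 : Mz ≤ c1 ∨ c2 ≤ Mz)
    (b3 : mz - s ≤ c1 ∨ c2 ≤ mz - s) (b4 : Mz - s ≤ c1 ∨ c2 ≤ Mz - s) :
    k * (min (z+s) Mz - max z mz) ≤
      ((c2 - z)/(c2-c1)) * (k * max 0 (min (c1+s) Mz - max c1 mz)) +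
      ((z - c1)/(c2-c1)) * (k * max 0 (min (c2+s) Mz - max c2 mz)) := by
  have h12 : c1 < c2 := h1.trans h2
  have hθ1 : 0 ≤ (c2 - z)/(c2-c1) := div_nonneg (by linarith) (by linarith)
  have hθ2 : 0 ≤ (z - c1)/(c2-c1) := div_nonneg (by linarith) (by linarith)
  rcases le_or_gt (min (z+s) Mz - max z mz) 0 with hneg | hpos
  · have : k * (min (z+s) Mz - max z mz) ≤ 0 := mul_nonpos_of_nonneg_of_nonpos hk hneg
    refine this.trans (add_nonneg ?_ ?_) <;>
      exact mul_nonneg (by assumption) (mul_nonneg hk (le_max_left _ _))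
  · have hzM : z < Mz := lt_of_le_of_lt (le_max_left z mz) (by
      have := min_le_right (z+s) Mz; linarith)
    have hzm : mz - s < z := by
      have h1' := min_le_left (z+s) Mz
      have h2' := le_max_right z mz
      linarith
    have hb3 : mz - s ≤ c1 := by rcases b3 with h | h; exact h; linarith
    have hb2 : c2 ≤ Mz := by rcases b2 with h | h; linarith; exact h
    have key : ∀ α β : ℝ,
        (min (z+s) Mz - max z mz = α + β*z) → (min (c1+s) Mz - max c1 mz = α + β*c1) →
        (min (c2+s) Mz - max c2 mz = α + β*c2) → 0 ≤ α + β*c1 → 0 ≤ α + β*c2 →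
        k * (min (z+s) Mz - max z mz) ≤
          ((c2 - z)/(c2-c1)) * (k * max 0 (min (c1+s) Mz - max c1 mz)) +
          ((z - c1)/(c2-c1)) * (k * max 0 (min (c2+s) Mz - max c2 mz)) := by
      intro α β e0 e1 e2 n1 n2
      rw [e0, e1, e2, max_eq_right n1, max_eq_right n2]
      exact le_of_eq (affine_combo k α β c1 c2 z h12).symm
    rcases b1 with hb1 | hb1 <;> rcases b4 with hb4 | hb4
    · refine key Mz (-1) ?_ ?_ ?_ (by linarith) (by linarith) <;>
        rw [min_eq_right (by linarith), max_eq_left (by linarith)] <;> ring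
    · refine key s 0 ?_ ?_ ?_ (by linarith) (by linarith) <;>
        rw [min_eq_left (by linarith), max_eq_left (by linarith)] <;> ring
    · refine key (Mz - mz) 0 ?_ ?_ ?_ (by linarith) (by linarith) <;>
        rw [min_eq_right (by linarith), max_eq_right (by linarith)] <;> ring
    · refine key (s - mz) 1 ?_ ?_ ?_ (by linarith) (by linarith) <;>
        rw [min_eq_left (by linarith), max_eq_right (by linarith)] <;> ring

lemma edge_vol_z_pos (a b u d z' s : ℝ) (hab : a < b) (hd : 0 < d) (Z : ℝ → ℝ)
    (hZ : ∀ τ ∈ Ico a b, Z τ = u + ((τ - a)/(b - a))*d) :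
    volume {τ ∈ Ico a b | Z τ ∈ Icc z' (z' + s)} =
      ENNReal.ofReal (((b - a)/|d|) *
        (min (z' + s) (max u (u + d)) - max z' (min u (u + d)))) := by
  have hba : (0:ℝ) < b - a := by linarith
  set φ : ℝ → ℝ := fun w => a + (w - u) * (b - a) / d with hφ
  have hmono : Monotone φ := by
    intro A B hAB
    have : A * ((b-a)/d) ≤ B * ((b-a)/d) :=
      mul_le_mul_of_nonneg_right hAB (le_of_lt (div_pos hba hd))
    simp only [hφ]
    have e1 : (A - u) * (b - a) / d = A * ((b-a)/d) - u * ((b-a)/d) := by ring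
    have e2 : (B - u) * (b - a) / d = B * ((b-a)/d) - u * ((b-a)/d) := by ring
    rw [e1, e2]; linarith
  have hle : ∀ w τ', (w ≤ u + (τ' - a)/(b - a)*d ↔ φ w ≤ τ') := by
    intro w τ'
    simp only [hφ]
    rw [← sub_le_iff_le_add', div_mul_eq_mul_div, le_div_iff₀ hba, ← div_le_iff₀ hd,
      le_sub_iff_add_le']
  have hge : ∀ w τ', (u + (τ' - a)/(b - a)*d ≤ w ↔ τ' ≤ φ w) := by
    intro w τ'
    simp only [hφ]
    rw [← le_sub_iff_add_le', div_mul_eq_mul_div, div_le_iff₀ hba, ← le_div_iff₀ hd,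
      sub_le_iff_le_add']
  have hset : {τ ∈ Ico a b | Z τ ∈ Icc z' (z' + s)} = Ico a b ∩ Icc (φ z') (φ (z' + s)) := by
    ext τ
    simp only [mem_setOf_eq, mem_inter_iff, mem_Icc]
    constructor
    · rintro ⟨hτ, h1, h2⟩
      rw [hZ τ hτ] at h1 h2
      exact ⟨hτ, (hle _ _).mp h1, (hge _ _).mp h2⟩
    · rintro ⟨hτ, h1, h2⟩
      refine ⟨hτ, ?_, ?_⟩ <;> rw [hZ τ hτ]
      · exact (hle _ _).mpr h1
      · exact (hge _ _).mpr h2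
  rw [hset, vol_Ico_inter_Icc]
  congr 1
  have hbφ : b = φ (u + d) := by simp only [hφ]; field_simp; ring
  have haφ : a = φ u := by simp only [hφ]; ring_nf
  have hminφ : ∀ A B : ℝ, min (φ A) (φ B) = φ (min A B) := fun A B => (hmono.map_min).symm
  have hmaxφ : ∀ A B : ℝ, max (φ A) (φ B) = φ (max A B) := fun A B => (hmono.map_max).symm
  rw [max_eq_right (le_add_of_nonneg_right hd.le), min_eq_left (le_add_of_nonneg_right hd.le),
    hbφ, haφ, hminφ, hmaxφ, abs_of_pos hd]
  simp only [hφ]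
  rw [min_comm, max_comm]
  field_simp
  ring

lemma edge_vol_z (a b u d z' s : ℝ) (hab : a < b) (hd : d ≠ 0) (Z : ℝ → ℝ)
    (hZ : ∀ τ ∈ Ico a b, Z τ = u + ((τ - a)/(b - a))*d) :
    volume {τ ∈ Ico a b | Z τ ∈ Icc z' (z' + s)} =
      ENNReal.ofReal (((b - a)/|d|) *
        (min (z' + s) (max u (u + d)) - max z' (min u (u + d)))) := by
  rcases hd.lt_or_gt with hneg | hpos
  · have h' : ∀ τ ∈ Ico a b, (fun τ => -(Z τ)) τ = -u + ((τ - a)/(b - a))*(-d) := by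
      intro τ hτ
      simp only
      rw [hZ τ hτ]; ring
    have hset : {τ ∈ Ico a b | Z τ ∈ Icc z' (z' + s)} =
        {τ ∈ Ico a b | (fun τ => -(Z τ)) τ ∈ Icc (-(z'+s)) (-(z'+s) + s)} := by
      ext τ
      simp only [mem_setOf_eq, mem_Icc]
      constructor
      · rintro ⟨h1, h2, h3⟩; exact ⟨h1, by linarith, by linarith⟩
      · rintro ⟨h1, h2, h3⟩; exact ⟨h1, by linarith, by linarith⟩
    rw [hset, edge_vol_z_pos a b (-u) (-d) (-(z'+s)) s hab (by linarith) _ h']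
    congr 1
    rw [show (-u + -d : ℝ) = -(u+d) by ring, show (-(z'+s)+s : ℝ) = -z' by ring,
      max_neg_neg, min_neg_neg, abs_neg]
    rw [show (-u) ⊓ (-(u+d)) = -(u ⊔ (u+d)) from min_neg_neg _ _, max_neg_neg]
    ring
  · exact edge_vol_z_pos a b u d z' s hab hpos Z hZ

lemma exists_edge (n : ℕ) (t : Fin (n+1) → ℝ) (ht : StrictMono t) (τ : ℝ)
    (h0 : t 0 ≤ τ) (hl : τ < t (Fin.last n)) :
    ∃ i : Fin n, τ ∈ Ico (t i.castSucc) (t i.succ) := by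
  classical
  have hn : n ≠ 0 := by
    rintro rfl
    exact absurd (h0.trans_lt hl) (lt_irrefl _)
  set J : Finset (Fin (n+1)) := Finset.univ.filter (fun j => t j ≤ τ) with hJ
  have hJne : J.Nonempty := ⟨0, by simp [hJ, h0]⟩
  obtain ⟨j, hjmem, hjmax⟩ : ∃ j ∈ J, ∀ k ∈ J, k ≤ j :=
    ⟨J.max' hJne, J.max'_mem hJne, fun k hk => J.le_max' k hk⟩
  have hjle : t j ≤ τ := by simpa [hJ] using hjmem
  have hjne : j ≠ Fin.last n := by
    rintro rfl
    exact absurd hjle (not_le.mpr hl)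
  obtain ⟨i, rfl⟩ := Fin.exists_castSucc_eq.mpr hjne
  refine ⟨i, hjle, ?_⟩
  by_contra hcon
  push_neg at hcon
  have : i.succ ∈ J := by simp [hJ, hcon]
  have hle := hjmax _ this
  exact absurd (lt_of_lt_of_le (Fin.castSucc_lt_succ (i := i)) hle) (lt_irrefl _)

lemma wgt3_eq_sum (n : ℕ) (t : Fin (n+1) → ℝ) (ht : StrictMono t)
    (T : ℝ → ℝ × ℝ × ℝ) (s x y w : ℝ)
    (hm : ∀ i : Fin n,
      MeasurableSet {τ ∈ Ico (t i.castSucc) (t i.succ) | T τ ∈ Cube s x y w}) :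
    wgt3 s (t 0) (t (Fin.last n)) T x y w =
      ∑' i : Fin n, volume {τ ∈ Ico (t i.castSucc) (t i.succ) | T τ ∈ Cube s x y w} := by
  classical
  set S : Fin n → Set ℝ := fun i => {τ ∈ Ico (t i.castSucc) (t i.succ) | T τ ∈ Cube s x y w}
    with hS
  have hdisj : Pairwise (Function.onFun Disjoint S) := by
    intro i j hij
    have key : ∀ i j : Fin n, i < j → Disjoint (S i) (S j) := by
      intro i j hlt
      apply Set.disjoint_left.mpr
      rintro τ ⟨⟨_, h2⟩, _⟩ ⟨⟨h3, _⟩, _⟩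
      have : t i.succ ≤ t j.castSucc := by
        apply ht.monotone
        rw [Fin.le_def]
        simpa [Fin.val_succ] using hlt
      linarith
    rcases hij.lt_or_gt with h | h
    · exact key _ _ h
    · exact (key _ _ h).symm
  have hsub : ∀ i, S i ⊆ {τ ∈ Icc (t 0) (t (Fin.last n)) | T τ ∈ Cube s x y w} := by
    rintro i τ ⟨⟨h1, h2⟩, h3⟩
    exact ⟨⟨(ht.monotone (Fin.zero_le _)).trans h1,
      h2.le.trans (ht.monotone (Fin.le_last _))⟩, h3⟩
  have hcover : {τ ∈ Icc (t 0) (t (Fin.last n)) | T τ ∈ Cube s x y w} ⊆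
      (⋃ i, S i) ∪ {t (Fin.last n)} := by
    rintro τ ⟨⟨h1, h2⟩, h3⟩
    rcases eq_or_lt_of_le h2 with heq | hlt
    · exact Or.inr (by simp [heq])
    · obtain ⟨i, hi⟩ := exists_edge n t ht τ h1 hlt
      exact Or.inl (mem_iUnion.mpr ⟨i, hi, h3⟩)
  rw [wgt3]
  apply le_antisymm
  · calc volume {τ ∈ Icc (t 0) (t (Fin.last n)) | T τ ∈ Cube s x y w}
        ≤ volume ((⋃ i, S i) ∪ {t (Fin.last n)}) := measure_mono hcover
      _ ≤ volume (⋃ i, S i) + volume ({t (Fin.last n)} : Set ℝ) := measure_union_le _ _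
      _ = volume (⋃ i, S i) := by rw [Real.volume_singleton, add_zero]
      _ = ∑' i, volume (S i) := measure_iUnion hdisj hm
  · rw [← measure_iUnion hdisj hm]
    exact measure_mono (iUnion_subset hsub)

lemma ofReal_mul_max0 (k A : ℝ) (hk : 0 ≤ k) :
    ENNReal.ofReal (k * A) = ENNReal.ofReal (k * max 0 A) := by
  rcases le_total 0 A with h | h
  · rw [max_eq_right h]
  · rw [max_eq_left h, mul_zero, ENNReal.ofReal_zero, ENNReal.ofReal_eq_zero]
    exact mul_nonpos_of_nonneg_of_nonpos hk h

theorem cube_on_xy_face_through_vertex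
    (n : ℕ) (hn : 1 ≤ n) (s : ℝ) (hs : 0 < s)
    (t : Fin (n + 1) → ℝ) (ht : StrictMono t)
    (p : Fin (n + 1) → ℝ × ℝ × ℝ)
    (T : ℝ → ℝ × ℝ × ℝ)
    (hT : ∀ i : Fin n, ∀ τ ∈ Icc (t i.castSucc) (t i.succ),
      T τ = p i.castSucc +
        ((τ - t i.castSucc) / (t i.succ - t i.castSucc)) • (p i.succ - p i.castSucc))
    (haxis : ∀ i : Fin n,
      ((p i.castSucc).1 = (p i.succ).1 ∧ (p i.castSucc).2.1 = (p i.succ).2.1) ∨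
      ((p i.castSucc).1 = (p i.succ).1 ∧ (p i.castSucc).2.2 = (p i.succ).2.2) ∨
      ((p i.castSucc).2.1 = (p i.succ).2.1 ∧ (p i.castSucc).2.2 = (p i.succ).2.2))
    (hzpos : ∀ i : Fin n,
      (p i.castSucc).1 = (p i.succ).1 → (p i.castSucc).2.1 = (p i.succ).2.1 →
        (p i.castSucc).2.2 ≠ (p i.succ).2.2) :
    ∀ x y z : ℝ, ∃ x' y' z' : ℝ, ∃ j : Fin (n + 1),
      wgt3 s (t 0) (t (Fin.last n)) T x' y' z' ≥
        wgt3 s (t 0) (t (Fin.last n)) T x y z ∧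
      ((p j).2.2 = z' ∨ (p j).2.2 = z' + s) := by
  classical
  intro x y z
  set S : ℝ → Fin n → Set ℝ :=
    fun w i => {τ ∈ Ico (t i.castSucc) (t i.succ) | T τ ∈ Cube s x y w} with hSdef
  have hab : ∀ i : Fin n, t i.castSucc < t i.succ := fun i => ht (Fin.castSucc_lt_succ (i := i))
  have hTIco : ∀ i : Fin n, ∀ τ ∈ Ico (t i.castSucc) (t i.succ),
      T τ = p i.castSucc +
        ((τ - t i.castSucc) / (t i.succ - t i.castSucc)) • (p i.succ - p i.castSucc) :=
    fun i τ hτ => hT i τ ⟨hτ.1, hτ.2.le⟩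
  have hcomp : ∀ i : Fin n, ∀ τ ∈ Ico (t i.castSucc) (t i.succ),
      (T τ).1 = (p i.castSucc).1 +
        ((τ - t i.castSucc)/(t i.succ - t i.castSucc)) * ((p i.succ).1 - (p i.castSucc).1) ∧
      (T τ).2.1 = (p i.castSucc).2.1 +
        ((τ - t i.castSucc)/(t i.succ - t i.castSucc)) * ((p i.succ).2.1 - (p i.castSucc).2.1) ∧
      (T τ).2.2 = (p i.castSucc).2.2 +
        ((τ - t i.castSucc)/(t i.succ - t i.castSucc)) * ((p i.succ).2.2 - (p i.castSucc).2.2) := by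
    intro i τ hτ
    rw [hTIco i τ hτ]
    refine ⟨?_, ?_, ?_⟩ <;> simp [Prod.add_def, Prod.sub_def, Prod.smul_def, smul_eq_mul]
  have hmeas : ∀ w (i : Fin n), MeasurableSet (S w i) := by
    intro w i
    have heq : S w i = Ico (t i.castSucc) (t i.succ) ∩
        (fun τ => p i.castSucc +
          ((τ - t i.castSucc) / (t i.succ - t i.castSucc)) • (p i.succ - p i.castSucc)) ⁻¹'
          (Cube s x y w) := by
      ext τ
      simp only [hSdef, mem_setOf_eq, mem_inter_iff, mem_preimage]
      constructor
      · rintro ⟨h1, h2⟩; exact ⟨h1, by rw [← hTIco i τ h1]; exact h2⟩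
      · rintro ⟨h1, h2⟩; exact ⟨h1, by rw [hTIco i τ h1]; exact h2⟩
    rw [heq]
    refine measurableSet_Ico.inter (Continuous.measurable (by fun_prop) ?_)
    exact (measurableSet_Icc.prod (measurableSet_Icc.prod measurableSet_Icc))
  have hFsum : ∀ w, wgt3 s (t 0) (t (Fin.last n)) T x y w = ∑' i : Fin n, volume (S w i) :=
    fun w => wgt3_eq_sum n t ht T s x y w (hmeas w)
  set B : Finset ℝ := (Finset.univ.image fun j : Fin (n+1) => (p j).2.2) ∪
      (Finset.univ.image fun j : Fin (n+1) => (p j).2.2 - s) with hB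
  have hBv : ∀ j : Fin (n+1), (p j).2.2 ∈ B ∧ (p j).2.2 - s ∈ B := by
    intro j
    constructor
    · simp only [hB, Finset.mem_union, Finset.mem_image]
      exact Or.inl ⟨j, Finset.mem_univ _, rfl⟩
    · simp only [hB, Finset.mem_union, Finset.mem_image]
      exact Or.inr ⟨j, Finset.mem_univ _, rfl⟩
  have hBj : ∀ b ∈ B, ∃ j : Fin (n+1), (p j).2.2 = b ∨ (p j).2.2 = b + s := by
    intro b hb
    simp only [hB, Finset.mem_union, Finset.mem_image] at hb
    rcases hb with ⟨j, -, hj⟩ | ⟨j, -, hj⟩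
    · exact ⟨j, Or.inl hj⟩
    · exact ⟨j, Or.inr (by linarith)⟩
  have hrange : ∀ i : Fin n, ∀ τ ∈ Ico (t i.castSucc) (t i.succ),
      min (p i.castSucc).2.2 (p i.succ).2.2 ≤ (T τ).2.2 ∧
        (T τ).2.2 ≤ max (p i.castSucc).2.2 (p i.succ).2.2 := by
    intro i τ hτ
    obtain ⟨-, -, hz⟩ := hcomp i τ hτ
    have hba := hab i
    have hr0 : 0 ≤ (τ - t i.castSucc)/(t i.succ - t i.castSucc) :=
      div_nonneg (by linarith [hτ.1]) (by linarith)
    have hr1 : (τ - t i.castSucc)/(t i.succ - t i.castSucc) ≤ 1 := by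
      rw [div_le_one (by linarith)]; linarith [hτ.2]
    rw [hz]
    constructor
    · rcases le_total (p i.castSucc).2.2 (p i.succ).2.2 with h | h
      · rw [min_eq_left h]; nlinarith
      · rw [min_eq_right h]; nlinarith
    · rcases le_total (p i.castSucc).2.2 (p i.succ).2.2 with h | h
      · rw [max_eq_right h]; nlinarith
      · rw [max_eq_left h]; nlinarith
  by_cases hlow : ∃ b ∈ B, b ≤ z
  swap
  · -- z below every breakpoint : weight is zero
    push_neg at hlow
    refine ⟨x, y, (p 0).2.2, 0, ?_, Or.inl rfl⟩
    have hz0 : wgt3 s (t 0) (t (Fin.last n)) T x y z = 0 := by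
      rw [hFsum z]
      have hempty : ∀ i : Fin n, volume (S z i) = 0 := by
        intro i
        have : S z i = ∅ := by
          rw [eq_empty_iff_forall_notMem]
          rintro τ ⟨h1, h2⟩
          rw [mem_Cube_iff] at h2
          have h3 := (hrange i τ h1).1
          have h4 := hlow _ (hBv i.castSucc).2
          have h5 := hlow _ (hBv i.succ).2
          have h6 := h2.2.2.2
          rcases le_total (p i.castSucc).2.2 (p i.succ).2.2 with h | h
          · rw [min_eq_left h] at h3; linarith
          · rw [min_eq_right h] at h3; linarith
        rw [this]; exact measure_empty
      simp only [hempty, tsum_zero]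
    rw [hz0]
    exact zero_le
  by_cases hhigh : ∃ b ∈ B, z ≤ b
  swap
  · -- z above every breakpoint : weight is zero
    push_neg at hhigh
    refine ⟨x, y, (p 0).2.2, 0, ?_, Or.inl rfl⟩
    have hz0 : wgt3 s (t 0) (t (Fin.last n)) T x y z = 0 := by
      rw [hFsum z]
      have hempty : ∀ i : Fin n, volume (S z i) = 0 := by
        intro i
        have : S z i = ∅ := by
          rw [eq_empty_iff_forall_notMem]
          rintro τ ⟨h1, h2⟩
          rw [mem_Cube_iff] at h2
          have h3 := (hrange i τ h1).2
          have h4 := hhigh _ (hBv i.castSucc).1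
          have h5 := hhigh _ (hBv i.succ).1
          have h6 := h2.2.2.1
          rcases le_total (p i.castSucc).2.2 (p i.succ).2.2 with h | h
          · rw [max_eq_right h] at h3; linarith
          · rw [max_eq_left h] at h3; linarith
        rw [this]; exact measure_empty
      simp only [hempty, tsum_zero]
    rw [hz0]
    exact zero_le
  by_cases hzB : z ∈ B
  · obtain ⟨j, hj⟩ := hBj z hzB
    exact ⟨x, y, z, j, le_refl _, hj⟩
  -- main case : z strictly between two consecutive breakpoints
  obtain ⟨bl, hblB, hblz⟩ := hlow
  obtain ⟨bh, hbhB, hbhz⟩ := hhigh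
  have hlne : (B.filter (· ≤ z)).Nonempty := ⟨bl, Finset.mem_filter.mpr ⟨hblB, hblz⟩⟩
  have hhne : (B.filter (z ≤ ·)).Nonempty := ⟨bh, Finset.mem_filter.mpr ⟨hbhB, hbhz⟩⟩
  obtain ⟨c1, hc1B, hc1le, hc1max⟩ :
      ∃ c1, c1 ∈ B ∧ c1 ≤ z ∧ ∀ b ∈ B, b ≤ z → b ≤ c1 :=
    ⟨(B.filter (· ≤ z)).max' hlne,
      (Finset.mem_filter.mp ((B.filter (· ≤ z)).max'_mem hlne)).1,
      (Finset.mem_filter.mp ((B.filter (· ≤ z)).max'_mem hlne)).2,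
      fun b hb h => Finset.le_max' (B.filter (· ≤ z)) b (Finset.mem_filter.mpr ⟨hb, h⟩)⟩
  obtain ⟨c2, hc2B, hc2le, hc2min⟩ :
      ∃ c2, c2 ∈ B ∧ z ≤ c2 ∧ ∀ b ∈ B, z ≤ b → c2 ≤ b :=
    ⟨(B.filter (z ≤ ·)).min' hhne,
      (Finset.mem_filter.mp ((B.filter (z ≤ ·)).min'_mem hhne)).1,
      (Finset.mem_filter.mp ((B.filter (z ≤ ·)).min'_mem hhne)).2,
      fun b hb h => Finset.min'_le (B.filter (z ≤ ·)) b (Finset.mem_filter.mpr ⟨hb, h⟩)⟩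
  have hc1z : c1 < z := lt_of_le_of_ne hc1le (fun h => hzB (h ▸ hc1B))
  have hzc2 : z < c2 := lt_of_le_of_ne hc2le (fun h => hzB (h ▸ hc2B))
  have h12 : c1 < c2 := hc1z.trans hzc2
  have hsep : ∀ b ∈ B, b ≤ c1 ∨ c2 ≤ b := by
    intro b hb
    rcases le_total b z with h | h
    · exact Or.inl (hc1max b hb h)
    · exact Or.inr (hc2min b hb h)
  have hθ1 : (0:ℝ) ≤ (c2 - z)/(c2 - c1) := div_nonneg (by linarith) (by linarith)
  have hθ2 : (0:ℝ) ≤ (z - c1)/(c2 - c1) := div_nonneg (by linarith) (by linarith)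
  set E1 := ENNReal.ofReal ((c2 - z)/(c2 - c1)) with hE1
  set E2 := ENNReal.ofReal ((z - c1)/(c2 - c1)) with hE2
  have hθsum : E1 + E2 = 1 := by
    rw [hE1, hE2, ← ENNReal.ofReal_add hθ1 hθ2, ← add_div,
      show c2 - z + (z - c1) = c2 - c1 by ring, div_self (by linarith : c2 - c1 ≠ 0)]
    exact ENNReal.ofReal_one
  have hedge : ∀ i : Fin n, volume (S z i) ≤ E1 * volume (S c1 i) + E2 * volume (S c2 i) := by
    intro i
    by_cases huv : (p i.castSucc).2.2 = (p i.succ).2.2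
    · -- edge with constant z-coordinate
      have hZconst : ∀ τ ∈ Ico (t i.castSucc) (t i.succ), (T τ).2.2 = (p i.castSucc).2.2 := by
        intro τ hτ
        rw [(hcomp i τ hτ).2.2, ← huv]
        ring
      by_cases hin : z ≤ (p i.castSucc).2.2 ∧ (p i.castSucc).2.2 ≤ z + s
      · have hc2u : c2 ≤ (p i.castSucc).2.2 := by
          rcases hsep _ (hBv i.castSucc).1 with h | h
          · linarith [hin.1]
          · exact h
        have hc1u : (p i.castSucc).2.2 - s ≤ c1 := by
          rcases hsep _ (hBv i.castSucc).2 with h | h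
          · exact h
          · linarith [hin.2]
        have hkey : ∀ w w' : ℝ, w ≤ (p i.castSucc).2.2 → (p i.castSucc).2.2 ≤ w + s →
            w' ≤ (p i.castSucc).2.2 → (p i.castSucc).2.2 ≤ w' + s → S w i = S w' i := by
          intro w w' hw1 hw2 hw3 hw4
          ext τ
          simp only [hSdef, mem_setOf_eq]
          constructor <;> rintro ⟨h1, h2⟩ <;> refine ⟨h1, ?_⟩ <;>
            rw [mem_Cube_iff] at h2 ⊢ <;>
            refine ⟨h2.1, h2.2.1, ?_⟩ <;>
            rw [hZconst τ h1] <;> exact ⟨by assumption, by assumption⟩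
        have e1 : S c1 i = S z i :=
          hkey c1 z (by linarith [hin.1]) (by linarith) hin.1 hin.2
        have e2 : S c2 i = S z i :=
          hkey c2 z hc2u (by linarith [hin.2]) hin.1 hin.2
        rw [e1, e2, ← add_mul, hθsum, one_mul]
      · have : S z i = ∅ := by
          rw [eq_empty_iff_forall_notMem]
          rintro τ ⟨h1, h2⟩
          rw [mem_Cube_iff] at h2
          rw [hZconst τ h1] at h2
          exact hin ⟨h2.2.2.1, h2.2.2.2⟩
        rw [this, measure_empty]
        exact zero_le
    · -- edge parallel to the z-axis
      have hxy : (p i.castSucc).1 = (p i.succ).1 ∧ (p i.castSucc).2.1 = (p i.succ).2.1 := by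
        rcases haxis i with h | h | h
        · exact h
        · exact absurd h.2 huv
        · exact absurd h.2 huv
      have hXconst : ∀ τ ∈ Ico (t i.castSucc) (t i.succ), (T τ).1 = (p i.castSucc).1 := by
        intro τ hτ
        rw [(hcomp i τ hτ).1, ← hxy.1]
        ring
      have hYconst : ∀ τ ∈ Ico (t i.castSucc) (t i.succ), (T τ).2.1 = (p i.castSucc).2.1 := by
        intro τ hτ
        rw [(hcomp i τ hτ).2.1, ← hxy.2]
        ring
      by_cases hinxy : (p i.castSucc).1 ∈ Icc x (x+s) ∧ (p i.castSucc).2.1 ∈ Icc y (y+s)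
      · have hSw : ∀ w, S w i = {τ ∈ Ico (t i.castSucc) (t i.succ) |
            (fun τ' => (T τ').2.2) τ ∈ Icc w (w+s)} := by
          intro w
          ext τ
          simp only [hSdef, mem_setOf_eq]
          constructor
          · rintro ⟨h1, h2⟩
            rw [mem_Cube_iff] at h2
            exact ⟨h1, h2.2.2⟩
          · rintro ⟨h1, h2⟩
            refine ⟨h1, (mem_Cube_iff _ _ _ _ _).mpr ⟨?_, ?_, h2⟩⟩
            · rw [hXconst τ h1]; exact hinxy.1
            · rw [hYconst τ h1]; exact hinxy.2
        have hd : (p i.succ).2.2 - (p i.castSucc).2.2 ≠ 0 := sub_ne_zero.mpr (Ne.symm huv)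
        have hvol : ∀ w, volume (S w i) = ENNReal.ofReal
            (((t i.succ - t i.castSucc)/|(p i.succ).2.2 - (p i.castSucc).2.2|) *
              (min (w + s) (max (p i.castSucc).2.2 (p i.succ).2.2) -
                max w (min (p i.castSucc).2.2 (p i.succ).2.2))) := by
          intro w
          rw [hSw w, edge_vol_z (t i.castSucc) (t i.succ) (p i.castSucc).2.2
            ((p i.succ).2.2 - (p i.castSucc).2.2) w s (hab i) hd _
            (fun τ hτ => (hcomp i τ hτ).2.2)]
          rw [show (p i.castSucc).2.2 + ((p i.succ).2.2 - (p i.castSucc).2.2) = (p i.succ).2.2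
            by ring]
        have hk : (0:ℝ) ≤ (t i.succ - t i.castSucc)/|(p i.succ).2.2 - (p i.castSucc).2.2| :=
          div_nonneg (by linarith [hab i]) (abs_nonneg _)
        have hmzB : min (p i.castSucc).2.2 (p i.succ).2.2 ∈ B ∧
            max (p i.castSucc).2.2 (p i.succ).2.2 ∈ B ∧
            min (p i.castSucc).2.2 (p i.succ).2.2 - s ∈ B ∧
            max (p i.castSucc).2.2 (p i.succ).2.2 - s ∈ B := by
          rcases le_total (p i.castSucc).2.2 (p i.succ).2.2 with h | h
          · rw [min_eq_left h, max_eq_right h]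
            exact ⟨(hBv i.castSucc).1, (hBv i.succ).1, (hBv i.castSucc).2, (hBv i.succ).2⟩
          · rw [min_eq_right h, max_eq_left h]
            exact ⟨(hBv i.succ).1, (hBv i.castSucc).1, (hBv i.succ).2, (hBv i.castSucc).2⟩
        set k := (t i.succ - t i.castSucc)/|(p i.succ).2.2 - (p i.castSucc).2.2| with hkdef
        set mz := min (p i.castSucc).2.2 (p i.succ).2.2 with hmzdef
        set Mz := max (p i.castSucc).2.2 (p i.succ).2.2 with hMzdef
        have hcore := core_B s mz Mz c1 c2 z k hs hk min_le_max hc1z hzc2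
          (hsep _ hmzB.1) (hsep _ hmzB.2.1) (hsep _ hmzB.2.2.1) (hsep _ hmzB.2.2.2)
        have h1' : E1 * ENNReal.ofReal (k * (min (c1 + s) Mz - max c1 mz)) =
            ENNReal.ofReal ((c2 - z)/(c2 - c1) * (k * max 0 (min (c1 + s) Mz - max c1 mz))) := by
          rw [ofReal_mul_max0 k _ hk, hE1, ← ENNReal.ofReal_mul hθ1]
        have h2' : E2 * ENNReal.ofReal (k * (min (c2 + s) Mz - max c2 mz)) =
            ENNReal.ofReal ((z - c1)/(c2 - c1) * (k * max 0 (min (c2 + s) Mz - max c2 mz))) := by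
          rw [ofReal_mul_max0 k _ hk, hE2, ← ENNReal.ofReal_mul hθ2]
        calc volume (S z i) = ENNReal.ofReal (k * (min (z + s) Mz - max z mz)) := hvol z
          _ ≤ ENNReal.ofReal ((c2 - z)/(c2-c1) * (k * max 0 (min (c1 + s) Mz - max c1 mz)) +
              (z - c1)/(c2-c1) * (k * max 0 (min (c2 + s) Mz - max c2 mz))) :=
            ENNReal.ofReal_le_ofReal hcore
          _ = ENNReal.ofReal ((c2 - z)/(c2-c1) * (k * max 0 (min (c1 + s) Mz - max c1 mz))) +
              ENNReal.ofReal ((z - c1)/(c2-c1) * (k * max 0 (min (c2 + s) Mz - max c2 mz))) :=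
            ENNReal.ofReal_add
              (mul_nonneg hθ1 (mul_nonneg hk (le_max_left _ _)))
              (mul_nonneg hθ2 (mul_nonneg hk (le_max_left _ _)))
          _ = E1 * volume (S c1 i) + E2 * volume (S c2 i) := by rw [hvol c1, hvol c2, h1', h2']
      · have : S z i = ∅ := by
          rw [eq_empty_iff_forall_notMem]
          rintro τ ⟨h1, h2⟩
          rw [mem_Cube_iff] at h2
          refine hinxy ⟨?_, ?_⟩
          · rw [← hXconst τ h1]; exact h2.1
          · rw [← hYconst τ h1]; exact h2.2.1
        rw [this, measure_empty]
        exact zero_le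
  have hsum : wgt3 s (t 0) (t (Fin.last n)) T x y z ≤
      E1 * wgt3 s (t 0) (t (Fin.last n)) T x y c1 +
      E2 * wgt3 s (t 0) (t (Fin.last n)) T x y c2 := by
    rw [hFsum z, hFsum c1, hFsum c2]
    calc ∑' i : Fin n, volume (S z i)
        ≤ ∑' i : Fin n, (E1 * volume (S c1 i) + E2 * volume (S c2 i)) :=
          ENNReal.tsum_le_tsum hedge
      _ = E1 * ∑' i : Fin n, volume (S c1 i) + E2 * ∑' i : Fin n, volume (S c2 i) := by
          rw [ENNReal.tsum_add, ENNReal.tsum_mul_left, ENNReal.tsum_mul_left]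
  rcases le_total (wgt3 s (t 0) (t (Fin.last n)) T x y c1)
      (wgt3 s (t 0) (t (Fin.last n)) T x y c2) with hc | hc
  · obtain ⟨j, hj⟩ := hBj c2 hc2B
    refine ⟨x, y, c2, j, ?_, hj⟩
    calc wgt3 s (t 0) (t (Fin.last n)) T x y z
        ≤ E1 * wgt3 s (t 0) (t (Fin.last n)) T x y c1 +
          E2 * wgt3 s (t 0) (t (Fin.last n)) T x y c2 := hsum
      _ ≤ E1 * wgt3 s (t 0) (t (Fin.last n)) T x y c2 +
          E2 * wgt3 s (t 0) (t (Fin.last n)) T x y c2 :=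
          add_le_add_left (mul_le_mul_right hc E1) _
      _ = (E1 + E2) * wgt3 s (t 0) (t (Fin.last n)) T x y c2 := (add_mul _ _ _).symm
      _ = wgt3 s (t 0) (t (Fin.last n)) T x y c2 := by rw [hθsum, one_mul]
  · obtain ⟨j, hj⟩ := hBj c1 hc1B
    refine ⟨x, y, c1, j, ?_, hj⟩
    calc wgt3 s (t 0) (t (Fin.last n)) T x y z
        ≤ E1 * wgt3 s (t 0) (t (Fin.last n)) T x y c1 +
          E2 * wgt3 s (t 0) (t (Fin.last n)) T x y c2 := hsum
      _ ≤ E1 * wgt3 s (t 0) (t (Fin.last n)) T x y c1 +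
          E2 * wgt3 s (t 0) (t (Fin.last n)) T x y c1 :=
          add_le_add_right (mul_le_mul_right hc E2) _
      _ = (E1 + E2) * wgt3 s (t 0) (t (Fin.last n)) T x y c1 := (add_mul _ _ _).symm
      _ = wgt3 s (t 0) (t (Fin.last n)) T x y c1 := by rw [hθsum, one_mul]
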